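/- One has 𝒢(3,0) = (27√3)/(2π) − 9. -/

import Mathlib

open intervalIntegral Real Complex

/-- `u(t) = (−1 + i√(4t−1))/(2t)`. -/
noncomputable def uu (t : ℝ) : ℂ :=
  (-1 + Complex.I * (Real.sqrt (4 * t - 1) : ℝ)) / (2 * t)

/-- The renormalized Green's function of the triangular-lattice walk:
`𝒢(x,y) = (3/π) ∫_{1/4}^{1} (4t−1)^{−1/2} ( t^y Σ_{j=1}^{x} C(x,j)(1−t)^{j−1} Re(u(t)^j)
  − Σ_{ℓ=0}^{y−1} t^ℓ ) dt`. -/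
noncomputable def calG (x y : ℕ) : ℝ :=
  (3 / Real.pi) * ∫ t in (1/4 : ℝ)..1,
    (1 / Real.sqrt (4 * t - 1)) *
      (t ^ y * ∑ j ∈ Finset.Icc 1 x, (x.choose j : ℝ) * (1 - t) ^ (j - 1) * ((uu t) ^ j).re
        - ∑ l ∈ Finset.range y, t ^ l)

/-- The explicit rational form of the integrand for `x = 3, y = 0`. -/
noncomputable def Gfun (t : ℝ) : ℝ :=
  (9*t^3 - 19*t^2 + 8*t - 1) / (2 * t^3 * Real.sqrt (4*t-1))

/-- An antiderivative of `Gfun` on `(1/4, 1)`. -/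
noncomputable def Ffun (t : ℝ) : ℝ :=
  (9/4) * Real.sqrt (4*t-1) + (5/2) * (Real.sqrt (4*t-1) / t)
    - Real.sqrt (4*t-1) / (4*t^2) - 9 * Real.arctan (Real.sqrt (4*t-1))

lemma integrand_eq_Gfun (t : ℝ) (ht : 1/4 < t) :
    (1 / Real.sqrt (4 * t - 1)) *
      (t ^ 0 * ∑ j ∈ Finset.Icc 1 3, ((3:ℕ).choose j : ℝ) * (1 - t) ^ (j - 1) * ((uu t) ^ j).re
        - ∑ l ∈ Finset.range 0, t ^ l)
    = Gfun t := by
  have ht0 : (0:ℝ) < t := by linarith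
  rw [Gfun]
  set s := Real.sqrt (4*t-1) with hs_def
  have hs2 : s^2 = 4*t-1 := Real.sq_sqrt (by linarith)
  have hspos : 0 < s := Real.sqrt_pos.2 (by linarith)
  have hz : uu t = Complex.ofReal (-1/(2*t)) + Complex.ofReal (s/(2*t)) * Complex.I := by
    have h2t : (2*(t:ℂ)) ≠ 0 := by
      simp only [ne_eq, mul_eq_zero, OfNat.ofNat_ne_zero, Complex.ofReal_eq_zero, false_or]
      exact_mod_cast ht0.ne'
    have htc : (t:ℂ) ≠ 0 := by exact_mod_cast ht0.ne'
    rw [uu, ← hs_def, div_eq_iff h2t]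
    push_cast
    field_simp
  rw [show Finset.Icc 1 3 = ({1,2,3} : Finset ℕ) by rfl]
  rw [Finset.sum_insert (by decide), Finset.sum_insert (by decide), Finset.sum_singleton]
  rw [hz]
  simp only [pow_one, pow_succ, pow_zero, one_mul, Complex.add_re, Complex.mul_re,
    Complex.ofReal_re, Complex.ofReal_im, Complex.I_re, Complex.I_im, Complex.add_im,
    Complex.mul_im]
  rw [show t = (s^2+1)/4 by rw [hs2]; ring]
  have hs4 : s^2 + 1 ≠ 0 := by positivity
  field_simp
  simp only [show Nat.choose 3 1 = 3 by rfl, show Nat.choose 3 2 = 3 by rfl,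
    show Nat.choose 3 3 = 1 by rfl, Nat.cast_ofNat, Nat.cast_one]
  ring

lemma hasDerivAt_Ffun (t : ℝ) (ht : 1/4 < t) : HasDerivAt Ffun (Gfun t) t := by
  have ht0 : (0:ℝ) < t := by linarith
  have h4 : 4*t-1 ≠ 0 := by intro h; nlinarith
  rw [Gfun]
  set s := Real.sqrt (4*t-1) with hs_def
  have hs2 : s^2 = 4*t-1 := Real.sq_sqrt (by linarith)
  have hspos : 0 < s := Real.sqrt_pos.2 (by linarith)
  have hinner : HasDerivAt (fun t : ℝ => 4*t-1) 4 t := by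
    simpa using ((hasDerivAt_id t).const_mul 4).sub_const 1
  have hsqrt : HasDerivAt (fun t : ℝ => Real.sqrt (4*t-1)) (2/s) t := by
    have := (Real.hasDerivAt_sqrt h4).comp t hinner
    refine this.congr_deriv ?_
    rw [← hs_def]
    field_simp
    ring
  have harctan : HasDerivAt (fun t : ℝ => Real.arctan (Real.sqrt (4*t-1)))
      (1/(1+s^2) * (2/s)) t := HasDerivAt.comp (h₂ := Real.arctan) t (Real.hasDerivAt_arctan s) hsqrt
  have hA : HasDerivAt (fun t : ℝ => Real.sqrt (4*t-1) / t)
      (((2/s)*t - s*1)/t^2) t := hsqrt.div (hasDerivAt_id t) ht0.ne'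
  have hB : HasDerivAt (fun t : ℝ => Real.sqrt (4*t-1) / (4*t^2))
      (((2/s)*(4*t^2) - s*(8*t))/(4*t^2)^2) t := by
    have hden : HasDerivAt (fun t : ℝ => 4*t^2) (8*t) t := by
      have := (hasDerivAt_pow 2 t).const_mul 4
      refine this.congr_deriv ?_
      push_cast
      ring
    exact hsqrt.div hden (by positivity)
  have hF : HasDerivAt Ffun
      ((9/4) * (2/s) + (5/2) * (((2/s)*t - s*1)/t^2)
        - ((2/s)*(4*t^2) - s*(8*t))/(4*t^2)^2 - 9 * (1/(1+s^2) * (2/s))) t :=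
    (((hsqrt.const_mul (9/4)).add (hA.const_mul (5/2))).sub hB).sub
      (harctan.const_mul 9)
  convert hF using 1
  rw [show t = (s^2+1)/4 by rw [hs2]; ring]
  have hs4 : s^2 + 1 ≠ 0 := by positivity
  field_simp
  ring

lemma Gfun_intervalIntegrable : IntervalIntegrable Gfun MeasureTheory.volume (1/4) 1 := by
  have h1 : IntervalIntegrable (fun x:ℝ => x ^ (-(1/2):ℝ)) MeasureTheory.volume 0 3 :=
    intervalIntegral.intervalIntegrable_rpow' (by norm_num)
  have h2 := (h1.comp_sub_right 1).comp_mul_left (c := 4)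
  norm_num at h2
  have hmaj : IntervalIntegrable (fun t : ℝ => 1184 * ((4*t-1) ^ (-(1/2):ℝ)))
      MeasureTheory.volume (1/4) 1 := h2.const_mul 1184
  apply hmaj.mono_fun'
  · have hm : Measurable Gfun := by
      apply Measurable.div
      · fun_prop
      · fun_prop
    exact hm.aestronglyMeasurable
  · rw [Set.uIoc_of_le (by norm_num : (1/4:ℝ) ≤ 1)]
    refine (MeasureTheory.ae_restrict_iff' measurableSet_Ioc).2
      (Filter.Eventually.of_forall fun x hx => ?_)
    obtain ⟨hx1, hx2⟩ := hx
    have hx0 : (0:ℝ) < x := by linarith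
    have hspos : 0 < Real.sqrt (4*x-1) := Real.sqrt_pos.2 (by linarith)
    have hrpow : ((4*x-1):ℝ) ^ (-(1/2):ℝ) = 1 / Real.sqrt (4*x-1) := by
      rw [Real.rpow_neg (by linarith), Real.sqrt_eq_rpow]
      exact (one_div _).symm
    show ‖Gfun x‖ ≤ 1184 * ((4*x-1) ^ (-(1/2):ℝ))
    rw [hrpow]
    have hp : |9*x^3 - 19*x^2 + 8*x - 1| ≤ 37 :=
      abs_le.2 ⟨by nlinarith, by nlinarith⟩
    have hsd : 0 < 2*x^3*Real.sqrt (4*x-1) := by positivity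
    rw [Gfun, Real.norm_eq_abs, abs_div, abs_of_pos hsd, mul_one_div,
      div_le_div_iff₀ hsd hspos]
    have h37 : (37:ℝ) ≤ 2368 * x^3 := by nlinarith
    nlinarith [mul_le_mul_of_nonneg_right hp hspos.le,
      mul_le_mul_of_nonneg_right h37 (mul_pos hspos hspos).le,
      sq_nonneg (Real.sqrt (4*x-1))]
  
lemma Ffun_continuousOn : ContinuousOn Ffun (Set.Icc (1/4 : ℝ) 1) := by
  have hc1 : Continuous (fun t : ℝ => Real.sqrt (4*t-1)) := by fun_prop
  have hne : ∀ x ∈ Set.Icc (1/4 : ℝ) 1, x ≠ 0 := fun x hx => by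
    have := hx.1; intro h; rw [h] at this; norm_num at this
  apply ContinuousOn.sub
  apply ContinuousOn.sub
  apply ContinuousOn.add
  · exact (continuous_const.mul hc1).continuousOn
  · exact continuousOn_const.mul (hc1.continuousOn.div continuousOn_id hne)
  · exact hc1.continuousOn.div (by fun_prop) fun x hx => by
      have := hne x hx; positivity
  · exact (continuous_const.mul (Real.continuous_arctan.comp hc1)).continuousOn

/-- `𝒢(3,0) = (27√3)/(2π) − 9`. -/
theorem calG_three_zero : calG 3 0 = 27 * Real.sqrt 3 / (2 * Real.pi) - 9 := by
  have heq : Set.EqOn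
      (fun t : ℝ => (1 / Real.sqrt (4 * t - 1)) *
        (t ^ 0 * ∑ j ∈ Finset.Icc 1 3,
            ((3:ℕ).choose j : ℝ) * (1 - t) ^ (j - 1) * ((uu t) ^ j).re
          - ∑ l ∈ Finset.range 0, t ^ l))
      Gfun (Set.uIcc (1/4 : ℝ) 1) := by
    intro t ht
    rw [Set.uIcc_of_le (by norm_num : (1/4:ℝ) ≤ 1)] at ht
    rcases eq_or_lt_of_le ht.1 with h | h
    · subst h
      norm_num [Gfun]
    · exact integrand_eq_Gfun t h
  have hderiv : ∀ t ∈ Set.Ioo (1/4 : ℝ) 1, HasDerivAt Ffun (Gfun t) t :=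
    fun t ht => hasDerivAt_Ffun t ht.1
  have key : (∫ t in (1/4 : ℝ)..1,
      (1 / Real.sqrt (4 * t - 1)) *
        (t ^ 0 * ∑ j ∈ Finset.Icc 1 3,
            ((3:ℕ).choose j : ℝ) * (1 - t) ^ (j - 1) * ((uu t) ^ j).re
          - ∑ l ∈ Finset.range 0, t ^ l)) = Ffun 1 - Ffun (1/4) := by
    rw [intervalIntegral.integral_congr heq]
    exact intervalIntegral.integral_eq_sub_of_hasDerivAt_of_le (by norm_num)
      Ffun_continuousOn hderiv Gfun_intervalIntegrable
  have hF1 : Ffun 1 = (9/2) * Real.sqrt 3 - 3 * Real.pi := by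
    rw [Ffun]
    rw [show (4*(1:ℝ)-1) = 3 by norm_num]
    rw [show Real.arctan (Real.sqrt 3) = Real.pi / 3 by
      rw [← Real.tan_pi_div_three, Real.arctan_tan] <;> linarith [Real.pi_pos]]
    ring
  have hF14 : Ffun (1/4 : ℝ) = 0 := by
    rw [Ffun]
    norm_num
  rw [calG, key, hF1, hF14]
  have hπ : Real.pi ≠ 0 := Real.pi_ne_zero
  field_simp
  ring
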